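/- Let q ∈ 𝕋 and b ∈ 𝔻 with q·b ≠ conj(b). Then |conj(q)(1 − |b|²) + b²| < 1. -/

import Mathlib

open scoped ComplexConjugate

/-- For `q ∈ 𝕋` and `b ∈ 𝔻` with `q·b ≠ conj b`, one has `|conj q (1 - |b|²) + b²| < 1`. -/
theorem stmt10 (q b : ℂ) (hq : ‖q‖ = 1) (hb : ‖b‖ < 1) (hqb : q * b ≠ conj b) :
    ‖conj q * ((1 : ℂ) - (‖b‖ ^ 2 : ℝ)) + b ^ 2‖ < 1 := by
  have hb0 : b ≠ 0 := by rintro rfl; simp at hqb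
  have hr : ‖b‖ ^ 2 < 1 := by nlinarith [norm_nonneg b]
  have hr0 : (0:ℝ) < ‖b‖ ^ 2 := pow_pos (norm_pos_iff.mpr hb0) 2
  have hx : ‖conj q * ((1 : ℂ) - (‖b‖ ^ 2 : ℝ))‖ = 1 - ‖b‖ ^ 2 := by
    rw [norm_mul, RCLike.norm_conj, hq, one_mul,
      show ((1:ℂ) - (‖b‖^2 : ℝ)) = ((1 - ‖b‖^2 : ℝ) : ℂ) by push_cast; ring,
      Complex.norm_real, Real.norm_eq_abs, abs_of_nonneg (by linarith)]
  have hy : ‖b ^ 2‖ = ‖b‖ ^ 2 := norm_pow b 2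
  have hray : ¬ SameRay ℝ (conj q * ((1 : ℂ) - (‖b‖ ^ 2 : ℝ))) (b ^ 2) := by
    intro h
    have h2 := h.norm_smul_eq
    rw [hx, hy] at h2
    have h3 : ((1 - ‖b‖^2 : ℝ) : ℂ) * b ^ 2 = (‖b‖^2 : ℝ) * (conj q * ((1:ℂ) - (‖b‖^2 : ℝ))) := by
      simpa [Complex.real_smul] using h2
    have hne : ((1 - ‖b‖^2 : ℝ) : ℂ) ≠ 0 := by
      simp only [ne_eq, Complex.ofReal_eq_zero]
      intro h'; linarith
    have h4 : b ^ 2 = (‖b‖^2 : ℝ) * conj q := by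
      apply mul_left_cancel₀ hne
      rw [h3]; push_cast; ring
    have hqq : q * conj q = 1 := by
      rw [Complex.mul_conj]
      norm_cast
      simp [Complex.normSq_eq_norm_sq, hq]
    have hbb : b * conj b = ((‖b‖^2 : ℝ) : ℂ) := by
      rw [Complex.mul_conj]
      norm_cast
      simp [Complex.normSq_eq_norm_sq]
    have h5 : b * (q * b - conj b) = 0 := by
      have : q * b ^ 2 = (‖b‖^2 : ℝ) * (q * conj q) := by rw [h4]; ring
      rw [hqq, mul_one] at this
      calc b * (q * b - conj b) = q * b ^ 2 - b * conj b := by ring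
        _ = 0 := by rw [this, hbb]; ring
    rcases mul_eq_zero.mp h5 with h | h
    · exact hb0 h
    · exact hqb (sub_eq_zero.mp h)
  have h1 := norm_add_lt_of_not_sameRay hray
  rw [hx, hy] at h1
  linarith
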